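/- arXiv:1610.03986 — 5 statements merged into one kernel-verified Lean document; each statement's English description precedes it below -/
import Mathlib

section
/- Every point γ(s) on the curve defined by the continued-fraction recursion is an equilibrium of the RFM with pool: f(γ(s)) = 0 for all s in the domain of γ. -/
/-- The ribosome flow model with pool: vector field on `ℝ^{n+1}`. -/
def rfm (n : ℕ) (l lc : ℝ) (x : Fin (n + 1) → ℝ) : Fin (n + 1) → ℝ :=
  fun i =>
    let g : ℕ → ℝ := fun k => if h : k < n + 1 then x ⟨k, h⟩ else 0
    if i.val = 0 then -l * g 0 * (1 - g 1) + lc * g n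
    else if i.val = 1 then l * g 0 * (1 - g 1) - lc * g 1 * (1 - g 2)
    else if i.val = n then lc * g (n - 1) * (1 - g n) - lc * g n
    else lc * g (i.val - 1) * (1 - g i.val) - lc * g i.val * (1 - g (i.val + 1))

/-- Every point `γ(s)` of the continued-fraction curve is an equilibrium of
the RFM with pool: `f (γ s) = 0`. -/
theorem rfm_equilibrium (n : ℕ) (hn : 2 ≤ n) (l lc : ℝ)
    (hl : 0 < l) (hlc : 0 < lc) (a b : ℝ) (hab : a < b)
    (γ : ℕ → ℝ → ℝ)
    (hγn : ∀ s ∈ Set.Ioo a b, γ n s = s)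
    (hrec : ∀ i, 1 ≤ i → i ≤ n - 1 → ∀ s ∈ Set.Ioo a b,
      γ i s = s / (1 - γ (i + 1) s))
    (hγ0 : ∀ s ∈ Set.Ioo a b, γ 0 s = lc * s / (l * (1 - γ 1 s)))
    (hlt : ∀ i, 1 ≤ i → i ≤ n → ∀ s ∈ Set.Ioo a b, γ i s < 1) :
    ∀ s ∈ Set.Ioo a b, rfm n l lc (fun i => γ i.val s) = 0 := by
  intro s hs
  -- key flux identities
  have hA : ∀ i, 1 ≤ i → i ≤ n - 1 → γ i s * (1 - γ (i + 1) s) = s := by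
    intro i h1 h2
    have hne : 1 - γ (i + 1) s ≠ 0 := by
      have := hlt (i + 1) (by omega) (by omega) s hs
      linarith
    rw [hrec i h1 h2 s hs, div_mul_cancel₀ _ hne]
  have hB : l * γ 0 s * (1 - γ 1 s) = lc * s := by
    have h1 : γ 1 s < 1 := hlt 1 le_rfl (by omega) s hs
    have hne : l * (1 - γ 1 s) ≠ 0 := by
      apply mul_ne_zero hl.ne'
      linarith
    rw [hγ0 s hs]
    field_simp
    have h2 : 1 - γ 1 s ≠ 0 := sub_ne_zero.mpr (ne_of_gt h1)
    linear_combination s * mul_inv_cancel₀ h2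
  funext i
  simp only [rfm, Pi.zero_apply]
  have hg : ∀ k (h : k < n + 1),
      (if h : k < n + 1 then (fun i : Fin (n+1) => γ i.val s) ⟨k, h⟩ else 0) = γ k s := by
    intro k h
    simp [h]
  by_cases h0 : i.val = 0
  · rw [if_pos h0, hg 0 (by omega), hg 1 (by omega), hg n (by omega), hγn s hs]
    linarith [hB]
  · by_cases h1 : i.val = 1
    · rw [if_neg h0, if_pos h1, hg 0 (by omega), hg 1 (by omega), hg 2 (by omega)]
      have := hA 1 le_rfl (by omega)
      norm_num at this
      linear_combination hB - lc * this
    · by_cases h2 : i.val = n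
      · rw [if_neg h0, if_neg h1, if_pos h2, hg (n - 1) (by omega), hg n (by omega), hγn s hs]
        have := hA (n - 1) (by omega) (by omega)
        rw [show n - 1 + 1 = n by omega, hγn s hs] at this
        linear_combination lc * this
      · rw [if_neg h0, if_neg h1, if_neg h2, hg (i.val - 1) (by omega), hg i.val (by omega),
          hg (i.val + 1) (by omega)]
        have ha1 := hA (i.val - 1) (by omega) (by omega)
        rw [show i.val - 1 + 1 = i.val by omega] at ha1
        have ha2 := hA i.val (by omega) (by omega)
        linear_combination lc * ha1 - lc * ha2
end

section
/- Each column of the Jacobian J_f(x) of the RFM-with-pool vector field, evaluated at any equilibrium point γ(s) with γ_i(s) ∈ (0,1) for i ≥ 1 and γ_0(s) > 0, has strictly negative diagonal entry, nonnegative off-diagonal entries, and column sum equal to zero; hence by Gershgorin's theorem every eigenvalue of J_f(γ(s)) has real part ≤ 0. -/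
open Matrix

/-- The Jacobian matrix of the RFM-with-pool vector field. -/
noncomputable def rfmJac (n : ℕ) (l lc : ℝ) (p : Fin (n + 1) → ℝ) :
    Matrix (Fin (n + 1)) (Fin (n + 1)) ℝ :=
  Matrix.of fun k i => fderiv ℝ (fun x => rfm n l lc x k) p (Pi.single i 1)

namespace RFMaux

lemma eig_transpose {m : Type*} [Fintype m] [DecidableEq m] (M : Matrix m m ℂ) (μ : ℂ)
    (h : Module.End.HasEigenvalue (Matrix.toLin' M) μ) :
    Module.End.HasEigenvalue (Matrix.toLin' Mᵀ) μ := by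
  obtain ⟨v, hv, hv0⟩ := h.exists_hasEigenvector
  have hmv : (M - μ • 1).mulVec v = 0 := by
    have := Module.End.mem_eigenspace_iff.mp hv
    rw [Matrix.toLin'_apply] at this
    rw [Matrix.sub_mulVec, Matrix.smul_mulVec, Matrix.one_mulVec, this]
    simp
  have hdet : (M - μ • 1).det = 0 := by
    rw [← Matrix.exists_mulVec_eq_zero_iff]
    exact ⟨v, hv0, hmv⟩
  have hdetT : (Mᵀ - μ • 1).det = 0 := by
    rw [show Mᵀ - μ • 1 = (M - μ • 1)ᵀ by simp [Matrix.transpose_smul], Matrix.det_transpose]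
    exact hdet
  obtain ⟨w, hw0, hw⟩ := Matrix.exists_mulVec_eq_zero_iff.mpr hdetT
  refine Module.End.hasEigenvalue_of_hasEigenvector ⟨Module.End.mem_eigenspace_iff.mpr ?_, hw0⟩
  rw [Matrix.toLin'_apply]
  have := congrArg (· + μ • w) hw
  simpa [Matrix.sub_mulVec, Matrix.smul_mulVec, Matrix.one_mulVec, sub_add_cancel] using this

lemma gersh_col {m : Type*} [Fintype m] [DecidableEq m] (A : Matrix m m ℝ)
    (hoff : ∀ k i, k ≠ i → 0 ≤ A k i) (hcol : ∀ i, ∑ k, A k i = 0)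
    (μ : ℂ) (hμ : Module.End.HasEigenvalue (Matrix.toLin' (A.map (fun a => (a : ℂ)))) μ) :
    μ.re ≤ 0 := by
  have h2 := eig_transpose _ _ hμ
  obtain ⟨k, hk⟩ := eigenvalue_mem_ball h2
  rw [Metric.mem_closedBall] at hk
  have hrad : (∑ j ∈ Finset.univ.erase k, ‖(A.map (fun a => (a : ℂ)))ᵀ k j‖) = - A k k := by
    have h1 : ∀ j ∈ Finset.univ.erase k, ‖(A.map (fun a => (a : ℂ)))ᵀ k j‖ = A j k := by
      intro j hj
      have : (A.map (fun a => (a : ℂ)))ᵀ k j = ((A j k : ℝ) : ℂ) := rfl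
      rw [this, Complex.norm_real, Real.norm_eq_abs,
        abs_of_nonneg (hoff j k (Finset.ne_of_mem_erase hj))]
    rw [Finset.sum_congr rfl h1]
    have := hcol k
    rw [← Finset.add_sum_erase _ _ (Finset.mem_univ k)] at this
    linarith
  rw [hrad] at hk
  have hdiag : (A.map (fun a => (a : ℂ)))ᵀ k k = ((A k k : ℝ) : ℂ) := rfl
  rw [hdiag] at hk
  have h3 : μ.re - A k k ≤ ‖μ - ((A k k : ℝ) : ℂ)‖ := by
    have := Complex.re_le_norm (μ - ((A k k : ℝ) : ℂ))
    simpa using this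
  rw [Complex.dist_eq] at hk
  linarith

lemma hasfd_shape {m : ℕ} (c1 c2 c3 : ℝ) (a b c d e : Fin m) (p : Fin m → ℝ) :
    HasFDerivAt (fun x : Fin m → ℝ => c1 * x a * (1 - x b) + c2 * x c * (1 - x d) + c3 * x e)
      ((c1 * p a) • ((0:(Fin m → ℝ) →L[ℝ] ℝ) - ContinuousLinearMap.proj b)
        + (1 - p b) • (c1 • (ContinuousLinearMap.proj a : (Fin m → ℝ) →L[ℝ] ℝ))
        + ((c2 * p c) • ((0:(Fin m → ℝ) →L[ℝ] ℝ) - ContinuousLinearMap.proj d)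
          + (1 - p d) • (c2 • (ContinuousLinearMap.proj c : (Fin m → ℝ) →L[ℝ] ℝ)))
        + c3 • (ContinuousLinearMap.proj e : (Fin m → ℝ) →L[ℝ] ℝ)) p := by
  have hx : ∀ j : Fin m, HasFDerivAt (fun x : Fin m → ℝ => x j)
      (ContinuousLinearMap.proj j : (Fin m → ℝ) →L[ℝ] ℝ) p :=
    fun j => (ContinuousLinearMap.proj j : (Fin m → ℝ) →L[ℝ] ℝ).hasFDerivAt
  have h1 : HasFDerivAt (fun x : Fin m → ℝ => c1 * x a)
      (c1 • (ContinuousLinearMap.proj a : (Fin m → ℝ) →L[ℝ] ℝ)) p := (hx a).const_mul c1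
  have h2 : HasFDerivAt (fun x : Fin m → ℝ => (1:ℝ) - x b)
      ((0:(Fin m → ℝ) →L[ℝ] ℝ) - ContinuousLinearMap.proj b) p :=
    (hasFDerivAt_const 1 p).sub (hx b)
  have h3 := h1.mul h2
  have h4 : HasFDerivAt (fun x : Fin m → ℝ => c2 * x c)
      (c2 • (ContinuousLinearMap.proj c : (Fin m → ℝ) →L[ℝ] ℝ)) p := (hx c).const_mul c2
  have h5 : HasFDerivAt (fun x : Fin m → ℝ => (1:ℝ) - x d)
      ((0:(Fin m → ℝ) →L[ℝ] ℝ) - ContinuousLinearMap.proj d) p :=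
    (hasFDerivAt_const 1 p).sub (hx d)
  have h6 := h4.mul h5
  have h7 : HasFDerivAt (fun x : Fin m → ℝ => c3 * x e)
      (c3 • (ContinuousLinearMap.proj e : (Fin m → ℝ) →L[ℝ] ℝ)) p := (hx e).const_mul c3
  exact ((h3.add h6).add h7).congr_fderiv (by ring_nf)

lemma jac_entry {m : ℕ} (c1 c2 c3 : ℝ) (a b c d e : Fin m) (p : Fin m → ℝ)
    (f : (Fin m → ℝ) → ℝ)
    (hf : ∀ x, f x = c1 * x a * (1 - x b) + c2 * x c * (1 - x d) + c3 * x e) (i : Fin m) :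
    fderiv ℝ f p (Pi.single i 1) =
      c1 * ((if a = i then (1:ℝ) else 0) * (1 - p b) - p a * (if b = i then (1:ℝ) else 0))
      + c2 * ((if c = i then (1:ℝ) else 0) * (1 - p d) - p c * (if d = i then (1:ℝ) else 0))
      + c3 * (if e = i then (1:ℝ) else 0) := by
  have hfe : f = fun x => c1 * x a * (1 - x b) + c2 * x c * (1 - x d) + c3 * x e := funext hf
  subst hfe
  rw [(hasfd_shape c1 c2 c3 a b c d e p).fderiv]
  simp only [ContinuousLinearMap.add_apply, ContinuousLinearMap.smul_apply,
    ContinuousLinearMap.sub_apply, ContinuousLinearMap.zero_apply,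
    ContinuousLinearMap.coe_smul', Pi.smul_apply, ContinuousLinearMap.proj_apply,
    Pi.single_apply, smul_eq_mul]
  ring

section cases

variable (n : ℕ) (l lc : ℝ) (x : Fin (n+1) → ℝ)

lemma rfm_case0 (hn : 2 ≤ n) (k : Fin (n+1)) (hk : k.val = 0) :
    rfm n l lc x k = -l * x ⟨0, by omega⟩ * (1 - x ⟨1, by omega⟩) + lc * x ⟨n, by omega⟩ := by
  simp only [rfm, hk, if_pos]
  rw [dif_pos (show (0:ℕ) < n+1 by omega), dif_pos (show (1:ℕ) < n+1 by omega),
    dif_pos (show n < n+1 by omega)]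

lemma rfm_case1 (hn : 2 ≤ n) (k : Fin (n+1)) (hk : k.val = 1) :
    rfm n l lc x k = l * x ⟨0, by omega⟩ * (1 - x ⟨1, by omega⟩)
      - lc * x ⟨1, by omega⟩ * (1 - x ⟨2, by omega⟩) := by
  simp only [rfm, hk]
  rw [if_neg (by omega), if_pos trivial]
  rw [dif_pos (show (0:ℕ) < n+1 by omega), dif_pos (show (1:ℕ) < n+1 by omega),
    dif_pos (show (2:ℕ) < n+1 by omega)]

lemma rfm_casen (hn : 2 ≤ n) (k : Fin (n+1)) (hk : k.val = n) :
    rfm n l lc x k = lc * x ⟨n-1, by omega⟩ * (1 - x ⟨n, by omega⟩) - lc * x ⟨n, by omega⟩ := by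
  simp only [rfm, hk]
  rw [if_neg (by omega), if_neg (by omega), if_pos trivial]
  rw [dif_pos (show n-1 < n+1 by omega), dif_pos (show n < n+1 by omega)]

lemma rfm_casemid (hn : 2 ≤ n) (k : Fin (n+1)) (h2 : 2 ≤ k.val) (h3 : k.val ≤ n - 1) :
    rfm n l lc x k = lc * x ⟨k.val - 1, by omega⟩ * (1 - x ⟨k.val, by omega⟩)
      - lc * x ⟨k.val, by omega⟩ * (1 - x ⟨k.val + 1, by omega⟩) := by
  simp only [rfm]
  rw [if_neg (by omega), if_neg (by omega), if_neg (by omega)]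
  rw [dif_pos (show k.val - 1 < n+1 by omega), dif_pos (show k.val < n+1 by omega),
    dif_pos (show k.val + 1 < n+1 by omega)]

lemma rfm_sum (hn : 2 ≤ n) : ∑ k : Fin (n+1), rfm n l lc x k = 0 := by
  set u : ℕ → ℝ := fun k =>
    if hk : k < n then
      (if k = 0 then l * x ⟨0, by omega⟩ * (1 - x ⟨1, by omega⟩)
        else lc * x ⟨k, by omega⟩ * (1 - x ⟨k+1, by omega⟩))
    else lc * x ⟨n, by omega⟩ with hu
  set F : ℕ → ℝ := fun j => if h : j < n+1 then rfm n l lc x ⟨j, h⟩ else 0 with hF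
  have hFi : ∀ i : Fin (n+1), rfm n l lc x i = F i.val := by
    intro i
    simp only [hF]
    rw [dif_pos i.isLt]
  have key : ∀ k ∈ Finset.range n, F (k+1) = u k - u (k+1) := by
    intro k hk
    rw [Finset.mem_range] at hk
    simp only [hF]
    rw [dif_pos (show k + 1 < n + 1 by omega)]
    simp only [hu]
    rcases (show k = 0 ∨ k + 1 = n ∨ (2 ≤ k + 1 ∧ k + 1 ≤ n - 1) by omega) with h | h | h
    · subst h
      rw [rfm_case1 n l lc x hn _ rfl]
      rw [dif_pos (show (0:ℕ) < n by omega), dif_pos (show (1:ℕ) < n by omega),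
        if_pos rfl, if_neg (show (0:ℕ)+1 ≠ 0 by omega)]
    · obtain rfl : n = k + 1 := by omega
      rw [rfm_casen (k+1) l lc x hn _ rfl]
      rw [dif_pos (show k < k + 1 by omega), dif_neg (show ¬ (k+1 < k+1) by omega),
        if_neg (show k ≠ 0 by omega)]
      norm_num
    · rw [rfm_casemid n l lc x hn ⟨k+1, by omega⟩ (by simpa using h.1) (by simpa using h.2)]
      rw [dif_pos (show k < n by omega), dif_pos (show k + 1 < n by omega),
        if_neg (show k ≠ 0 by omega), if_neg (show k + 1 ≠ 0 by omega)]
      norm_num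
  calc ∑ k : Fin (n+1), rfm n l lc x k = ∑ j ∈ Finset.range (n+1), F j := by
        simp_rw [hFi]; exact Fin.sum_univ_eq_sum_range F (n+1)
    _ = (∑ k ∈ Finset.range n, F (k+1)) + F 0 := Finset.sum_range_succ' F n
    _ = (∑ k ∈ Finset.range n, (u k - u (k+1))) + F 0 := by rw [Finset.sum_congr rfl key]
    _ = (u 0 - u n) + F 0 := by rw [Finset.sum_range_sub' u]
    _ = 0 := by
        simp only [hF, hu]
        rw [dif_pos (show 0 < n + 1 by omega)]
        rw [rfm_case0 n l lc x hn _ rfl]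
        rw [dif_pos (show (0:ℕ) < n by omega), if_pos trivial, dif_neg (show ¬ (n < n) by omega)]
        ring


lemma jac_eq (p : Fin (n+1) → ℝ) (k : Fin (n+1)) (i : Fin (n+1)) :
    rfmJac n l lc p k i = fderiv ℝ (fun y => rfm n l lc y k) p (Pi.single i 1) := rfl

lemma row0 (hn : 2 ≤ n) (p : Fin (n+1) → ℝ) (k i : Fin (n+1)) (hk : k.val = 0) :
    rfmJac n l lc p k i =
      -l * ((if 0 = i.val then (1:ℝ) else 0) * (1 - p ⟨1, by omega⟩)
        - p ⟨0, by omega⟩ * (if 1 = i.val then (1:ℝ) else 0))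
      + lc * (if n = i.val then (1:ℝ) else 0) := by
  have hf : ∀ y : Fin (n+1) → ℝ, rfm n l lc y k =
      (-l) * y ⟨0, by omega⟩ * (1 - y ⟨1, by omega⟩)
      + 0 * y ⟨0, by omega⟩ * (1 - y ⟨1, by omega⟩) + lc * y ⟨n, by omega⟩ := by
    intro y; rw [rfm_case0 n l lc y hn k hk]; ring
  rw [jac_eq, jac_entry (-l) 0 lc ⟨0, by omega⟩ ⟨1, by omega⟩ ⟨0, by omega⟩ ⟨1, by omega⟩
    ⟨n, by omega⟩ p _ hf i]
  simp only [Fin.ext_iff]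
  ring

lemma row1 (hn : 2 ≤ n) (p : Fin (n+1) → ℝ) (k i : Fin (n+1)) (hk : k.val = 1) :
    rfmJac n l lc p k i =
      l * ((if 0 = i.val then (1:ℝ) else 0) * (1 - p ⟨1, by omega⟩)
        - p ⟨0, by omega⟩ * (if 1 = i.val then (1:ℝ) else 0))
      + (-lc) * ((if 1 = i.val then (1:ℝ) else 0) * (1 - p ⟨2, by omega⟩)
        - p ⟨1, by omega⟩ * (if 2 = i.val then (1:ℝ) else 0)) := by
  have hf : ∀ y : Fin (n+1) → ℝ, rfm n l lc y k =
      l * y ⟨0, by omega⟩ * (1 - y ⟨1, by omega⟩)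
      + (-lc) * y ⟨1, by omega⟩ * (1 - y ⟨2, by omega⟩) + 0 * y ⟨0, by omega⟩ := by
    intro y; rw [rfm_case1 n l lc y hn k hk]; ring
  rw [jac_eq, jac_entry l (-lc) 0 ⟨0, by omega⟩ ⟨1, by omega⟩ ⟨1, by omega⟩ ⟨2, by omega⟩
    ⟨0, by omega⟩ p _ hf i]
  simp only [Fin.ext_iff]
  ring

lemma rown (hn : 2 ≤ n) (p : Fin (n+1) → ℝ) (k i : Fin (n+1)) (hk : k.val = n) :
    rfmJac n l lc p k i =
      lc * ((if n - 1 = i.val then (1:ℝ) else 0) * (1 - p ⟨n, by omega⟩)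
        - p ⟨n - 1, by omega⟩ * (if n = i.val then (1:ℝ) else 0))
      + (-lc) * (if n = i.val then (1:ℝ) else 0) := by
  have hf : ∀ y : Fin (n+1) → ℝ, rfm n l lc y k =
      lc * y ⟨n - 1, by omega⟩ * (1 - y ⟨n, by omega⟩)
      + 0 * y ⟨n - 1, by omega⟩ * (1 - y ⟨n, by omega⟩) + (-lc) * y ⟨n, by omega⟩ := by
    intro y; rw [rfm_casen n l lc y hn k hk]; ring
  rw [jac_eq, jac_entry lc 0 (-lc) ⟨n - 1, by omega⟩ ⟨n, by omega⟩ ⟨n - 1, by omega⟩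
    ⟨n, by omega⟩ ⟨n, by omega⟩ p _ hf i]
  simp only [Fin.ext_iff]
  ring

lemma rowmid (hn : 2 ≤ n) (p : Fin (n+1) → ℝ) (k i : Fin (n+1))
    (h2 : 2 ≤ k.val) (h3 : k.val ≤ n - 1) :
    rfmJac n l lc p k i =
      lc * ((if k.val - 1 = i.val then (1:ℝ) else 0) * (1 - p ⟨k.val, by omega⟩)
        - p ⟨k.val - 1, by omega⟩ * (if k.val = i.val then (1:ℝ) else 0))
      + (-lc) * ((if k.val = i.val then (1:ℝ) else 0) * (1 - p ⟨k.val + 1, by omega⟩)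
        - p ⟨k.val, by omega⟩ * (if k.val + 1 = i.val then (1:ℝ) else 0)) := by
  have hf : ∀ y : Fin (n+1) → ℝ, rfm n l lc y k =
      lc * y ⟨k.val - 1, by omega⟩ * (1 - y ⟨k.val, by omega⟩)
      + (-lc) * y ⟨k.val, by omega⟩ * (1 - y ⟨k.val + 1, by omega⟩)
      + 0 * y ⟨k.val, by omega⟩ := by
    intro y; rw [rfm_casemid n l lc y hn k h2 h3]; ring
  rw [jac_eq, jac_entry lc (-lc) 0 ⟨k.val - 1, by omega⟩ ⟨k.val, by omega⟩ ⟨k.val, by omega⟩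
    ⟨k.val + 1, by omega⟩ ⟨k.val, by omega⟩ p _ hf i]
  simp only [Fin.ext_iff]
  ring

lemma hasfd_row (hn : 2 ≤ n) (p : Fin (n+1) → ℝ) (k : Fin (n+1)) :
    ∃ D : (Fin (n+1) → ℝ) →L[ℝ] ℝ, HasFDerivAt (fun y => rfm n l lc y k) D p := by
  have hc : k.val = 0 ∨ k.val = 1 ∨ k.val = n ∨ (2 ≤ k.val ∧ k.val ≤ n - 1) := by
    have := k.isLt; omega
  rcases hc with h | h | h | h
  · have hd := hasfd_shape (-l) 0 lc (⟨0, by omega⟩ : Fin (n+1)) ⟨1, by omega⟩ ⟨0, by omega⟩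
      ⟨1, by omega⟩ ⟨n, by omega⟩ p
    rw [show (fun y : Fin (n+1) → ℝ =>
      (-l) * y ⟨0, by omega⟩ * (1 - y ⟨1, by omega⟩)
      + 0 * y ⟨0, by omega⟩ * (1 - y ⟨1, by omega⟩) + lc * y ⟨n, by omega⟩)
      = (fun y => rfm n l lc y k) from
      (funext fun y => by rw [rfm_case0 n l lc y hn k h]; ring).symm] at hd
    exact ⟨_, hd⟩
  · have hd := hasfd_shape l (-lc) 0 (⟨0, by omega⟩ : Fin (n+1)) ⟨1, by omega⟩ ⟨1, by omega⟩
      ⟨2, by omega⟩ ⟨0, by omega⟩ p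
    rw [show (fun y : Fin (n+1) → ℝ =>
      l * y ⟨0, by omega⟩ * (1 - y ⟨1, by omega⟩)
      + (-lc) * y ⟨1, by omega⟩ * (1 - y ⟨2, by omega⟩) + 0 * y ⟨0, by omega⟩)
      = (fun y => rfm n l lc y k) from
      (funext fun y => by rw [rfm_case1 n l lc y hn k h]; ring).symm] at hd
    exact ⟨_, hd⟩
  · have hd := hasfd_shape lc 0 (-lc) (⟨n - 1, by omega⟩ : Fin (n+1)) ⟨n, by omega⟩
      ⟨n - 1, by omega⟩ ⟨n, by omega⟩ ⟨n, by omega⟩ p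
    rw [show (fun y : Fin (n+1) → ℝ =>
      lc * y ⟨n - 1, by omega⟩ * (1 - y ⟨n, by omega⟩)
      + 0 * y ⟨n - 1, by omega⟩ * (1 - y ⟨n, by omega⟩) + (-lc) * y ⟨n, by omega⟩)
      = (fun y => rfm n l lc y k) from
      (funext fun y => by rw [rfm_casen n l lc y hn k h]; ring).symm] at hd
    exact ⟨_, hd⟩
  · have hd := hasfd_shape lc (-lc) 0 (⟨k.val - 1, by omega⟩ : Fin (n+1)) ⟨k.val, by omega⟩
      ⟨k.val, by omega⟩ ⟨k.val + 1, by omega⟩ ⟨k.val, by omega⟩ p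
    rw [show (fun y : Fin (n+1) → ℝ =>
      lc * y ⟨k.val - 1, by omega⟩ * (1 - y ⟨k.val, by omega⟩)
      + (-lc) * y ⟨k.val, by omega⟩ * (1 - y ⟨k.val + 1, by omega⟩)
      + 0 * y ⟨k.val, by omega⟩)
      = (fun y => rfm n l lc y k) from
      (funext fun y => by rw [rfm_casemid n l lc y hn k h.1 h.2]; ring).symm] at hd
    exact ⟨_, hd⟩

end cases

end RFMaux

/-- At an interior equilibrium `γ(s)` of the RFM with pool, each column of the
Jacobian has strictly negative diagonal entry, nonnegative off-diagonal
entries, and zero column sum; hence (Gershgorin) every complex eigenvalue has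
real part `≤ 0`. -/
theorem jacobian_gershgorin (n : ℕ) (hn : 2 ≤ n) (l lc : ℝ)
    (hl : 0 < l) (hlc : 0 < lc) (s : ℝ) (hs : 0 < s)
    (γ : ℕ → ℝ)
    (hγ0pos : 0 < γ 0)
    (hmem : ∀ i, 1 ≤ i → i ≤ n → γ i ∈ Set.Ioo (0 : ℝ) 1)
    (hγn : γ n = s)
    (heq : ∀ i, 1 ≤ i → i ≤ n - 1 → γ i * (1 - γ (i + 1)) = s)
    (heq0 : l * γ 0 * (1 - γ 1) = lc * s) :
    (∀ i, rfmJac n l lc (fun i => γ i.val) i i < 0) ∧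
    (∀ k i, k ≠ i → 0 ≤ rfmJac n l lc (fun i => γ i.val) k i) ∧
    (∀ i, ∑ k, rfmJac n l lc (fun i => γ i.val) k i = 0) ∧
    (∀ μ : ℂ, Module.End.HasEigenvalue
        (Matrix.toLin' ((rfmJac n l lc (fun i => γ i.val)).map
          (fun a => (a : ℂ)))) μ → μ.re ≤ 0) := by
  have hδ : ∀ c : ℕ, ∀ i : Fin (n+1),
      (0:ℝ) ≤ (if c = i.val then (1:ℝ) else 0) ∧ (if c = i.val then (1:ℝ) else 0) ≤ 1 := by
    intro c i; split_ifs <;> norm_num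
  have h1m := hmem 1 (by omega) (by omega)
  have h2m := hmem 2 (by omega) (by omega)
  have hnm := hmem n (by omega) (by omega)
  have hn1m := hmem (n-1) (by omega) (by omega)
  simp only [Set.mem_Ioo] at h1m h2m hnm hn1m
  have P1 : ∀ i, rfmJac n l lc (fun i => γ i.val) i i < 0 := by
    intro i
    have hi := i.isLt
    rcases (show i.val = 0 ∨ i.val = 1 ∨ i.val = n ∨ (2 ≤ i.val ∧ i.val ≤ n - 1) by omega)
      with h | h | h | h
    · rw [RFMaux.row0 n l lc hn (fun i => γ i.val) i i h,
        if_pos h.symm, if_neg (by omega), if_neg (by omega)]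
      show -l * (1 * (1 - γ 1) - γ 0 * 0) + lc * 0 < 0
      nlinarith [h1m.2, hl]
    · rw [RFMaux.row1 n l lc hn (fun i => γ i.val) i i h,
        if_neg (by omega), if_pos h.symm, if_neg (by omega)]
      show l * (0 * (1 - γ 1) - γ 0 * 1) + (-lc) * (1 * (1 - γ 2) - γ 1 * 0) < 0
      nlinarith [mul_pos hl hγ0pos, h2m.2, hlc]
    · rw [RFMaux.rown n l lc hn (fun i => γ i.val) i i h,
        if_neg (by omega), if_pos h.symm]
      show lc * (0 * (1 - γ n) - γ (n-1) * 1) + (-lc) * 1 < 0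
      nlinarith [mul_pos hlc hn1m.1, hlc]
    · have hmk := hmem (i.val - 1) (by omega) (by omega)
      have hpk := hmem (i.val + 1) (by omega) (by omega)
      simp only [Set.mem_Ioo] at hmk hpk
      rw [RFMaux.rowmid n l lc hn (fun i => γ i.val) i i h.1 h.2,
        if_neg (by omega), if_pos rfl, if_neg (by omega)]
      show lc * (0 * (1 - γ i.val) - γ (i.val - 1) * 1)
        + (-lc) * (1 * (1 - γ (i.val + 1)) - γ i.val * 0) < 0
      nlinarith [mul_pos hlc hmk.1, hpk.2, hlc]
  have P2 : ∀ k i, k ≠ i → 0 ≤ rfmJac n l lc (fun i => γ i.val) k i := by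
    intro k i hki
    have hne : k.val ≠ i.val := fun hh => hki (Fin.ext hh)
    have hk := k.isLt
    rcases (show k.val = 0 ∨ k.val = 1 ∨ k.val = n ∨ (2 ≤ k.val ∧ k.val ≤ n - 1) by omega)
      with h | h | h | h
    · rw [RFMaux.row0 n l lc hn (fun i => γ i.val) k i h, if_neg (by omega)]
      show (0:ℝ) ≤ -l * (0 * (1 - γ 1) - γ 0 * (if 1 = i.val then (1:ℝ) else 0))
        + lc * (if n = i.val then (1:ℝ) else 0)
      nlinarith [mul_nonneg (mul_nonneg hl.le hγ0pos.le) (hδ 1 i).1,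
        mul_nonneg hlc.le (hδ n i).1]
    · rw [RFMaux.row1 n l lc hn (fun i => γ i.val) k i h,
        if_neg (show ¬(1 = i.val) by omega)]
      show (0:ℝ) ≤ l * ((if 0 = i.val then (1:ℝ) else 0) * (1 - γ 1) - γ 0 * 0)
        + (-lc) * (0 * (1 - γ 2) - γ 1 * (if 2 = i.val then (1:ℝ) else 0))
      nlinarith [mul_nonneg (mul_nonneg hl.le (hδ 0 i).1) (by linarith [h1m.2] : (0:ℝ) ≤ 1 - γ 1),
        mul_nonneg (mul_nonneg hlc.le h1m.1.le) (hδ 2 i).1]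
    · rw [RFMaux.rown n l lc hn (fun i => γ i.val) k i h,
        if_neg (show ¬(n = i.val) by omega)]
      show (0:ℝ) ≤ lc * ((if n - 1 = i.val then (1:ℝ) else 0) * (1 - γ n) - γ (n-1) * 0)
        + (-lc) * 0
      nlinarith [mul_nonneg (mul_nonneg hlc.le (hδ (n-1) i).1)
        (by linarith [hnm.2] : (0:ℝ) ≤ 1 - γ n)]
    · have hkk := hmem k.val (by omega) (by omega)
      simp only [Set.mem_Ioo] at hkk
      rw [RFMaux.rowmid n l lc hn (fun i => γ i.val) k i h.1 h.2,
        if_neg (show ¬(k.val = i.val) from hne)]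
      show (0:ℝ) ≤ lc * ((if k.val - 1 = i.val then (1:ℝ) else 0) * (1 - γ k.val)
          - γ (k.val - 1) * 0)
        + (-lc) * (0 * (1 - γ (k.val + 1)) - γ k.val * (if k.val + 1 = i.val then (1:ℝ) else 0))
      nlinarith [mul_nonneg (mul_nonneg hlc.le (hδ (k.val - 1) i).1)
          (by linarith [hkk.2] : (0:ℝ) ≤ 1 - γ k.val),
        mul_nonneg (mul_nonneg hlc.le hkk.1.le) (hδ (k.val + 1) i).1]
  have P3 : ∀ i, ∑ k, rfmJac n l lc (fun i => γ i.val) k i = 0 := by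
    intro i
    have hD := fun k => RFMaux.hasfd_row n l lc hn (fun i => γ i.val) k
    choose D hDf using hD
    have hJ : ∀ k, rfmJac n l lc (fun i => γ i.val) k i = D k (Pi.single i 1) := fun k => by
      rw [RFMaux.jac_eq, (hDf k).fderiv]
    rw [Finset.sum_congr rfl (fun k _ => hJ k), ← ContinuousLinearMap.sum_apply]
    have hsum : HasFDerivAt (fun y => ∑ k : Fin (n+1), rfm n l lc y k) (∑ k, D k)
        (fun i => γ i.val) := HasFDerivAt.fun_sum (fun k _ => hDf k)
    have hzero : (fun y : Fin (n+1) → ℝ => ∑ k : Fin (n+1), rfm n l lc y k)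
        = fun _ => (0:ℝ) := funext fun y => RFMaux.rfm_sum n l lc y hn
    rw [hzero] at hsum
    have h0 : (∑ k, D k) = 0 := hsum.unique (hasFDerivAt_const 0 _)
    rw [h0]
    rfl
  exact ⟨P1, P2, P3, fun μ hμ => RFMaux.gersh_col _ P2 P3 μ hμ⟩
end

section
/- The Jacobian of the RFM with pool evaluated at an interior equilibrium γ(s) has rank exactly n (i.e., its kernel is one-dimensional); in particular 0 is an eigenvalue of geometric multiplicity 1. -/
open scoped Matrix

lemma rfmKey {m : ℕ} (c1 c2 c3 : ℝ) (a b a2 b2 a3 : Fin m) (p : Fin m → ℝ) (i : Fin m) :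
    fderiv ℝ (fun x : Fin m → ℝ => c1 * x a * (1 - x b) + c2 * x a2 * (1 - x b2) + c3 * x a3) p
      (Pi.single i 1)
    = (c1 * (if a = i then (1:ℝ) else 0) * (1 - p b) - c1 * p a * (if b = i then (1:ℝ) else 0))
      + (c2 * (if a2 = i then (1:ℝ) else 0) * (1 - p b2) - c2 * p a2 * (if b2 = i then (1:ℝ) else 0))
      + c3 * (if a3 = i then (1:ℝ) else 0) := by
  have hP : ∀ a : Fin m, HasFDerivAt (fun x : Fin m → ℝ => x a)
      (ContinuousLinearMap.proj (R := ℝ) (φ := fun _ : Fin m => ℝ) a) p :=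
    fun a => (ContinuousLinearMap.proj (R := ℝ) (φ := fun _ : Fin m => ℝ) a).hasFDerivAt
  have h := (((((hP a).const_mul c1).mul ((hasFDerivAt_const (1:ℝ) p).sub (hP b))).add
    ((((hP a2).const_mul c2).mul ((hasFDerivAt_const (1:ℝ) p).sub (hP b2))))).add
      ((hP a3).const_mul c3))
  rw [(show HasFDerivAt (fun x : Fin m → ℝ => c1 * x a * (1 - x b) + c2 * x a2 * (1 - x b2) + c3 * x a3) _ p from h).fderiv]
  simp only [ContinuousLinearMap.add_apply, ContinuousLinearMap.smul_apply,
    ContinuousLinearMap.sub_apply, ContinuousLinearMap.zero_apply,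
    ContinuousLinearMap.proj_apply, Pi.single_apply, smul_eq_mul, Pi.sub_apply]
  ring

lemma rfmShapeDiff {m : ℕ} (c1 c2 c3 : ℝ) (a b a2 b2 a3 : Fin m) (p : Fin m → ℝ) :
    DifferentiableAt ℝ
      (fun x : Fin m → ℝ => c1 * x a * (1 - x b) + c2 * x a2 * (1 - x b2) + c3 * x a3) p := by
  have hP : ∀ a : Fin m, HasFDerivAt (fun x : Fin m → ℝ => x a)
      (ContinuousLinearMap.proj (R := ℝ) (φ := fun _ : Fin m => ℝ) a) p :=
    fun a => (ContinuousLinearMap.proj (R := ℝ) (φ := fun _ : Fin m => ℝ) a).hasFDerivAt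
  have h := (((((hP a).const_mul c1).mul ((hasFDerivAt_const (1:ℝ) p).sub (hP b))).add
    ((((hP a2).const_mul c2).mul ((hasFDerivAt_const (1:ℝ) p).sub (hP b2))))).add
      ((hP a3).const_mul c3))
  exact h.differentiableAt

lemma rfmRowEval {m : ℕ} (M : Matrix (Fin m) (Fin m) ℝ) (z : Fin m → ℝ) (k : Fin m)
    (c1 c2 c3 : ℝ) (a b a2 b2 a3 : Fin m) (p : Fin m → ℝ)
    (hM : ∀ i, M k i = fderiv ℝ
      (fun x : Fin m → ℝ => c1 * x a * (1 - x b) + c2 * x a2 * (1 - x b2) + c3 * x a3) p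
      (Pi.single i 1)) :
    (M *ᵥ z) k = c1 * (1 - p b) * z a - c1 * p a * z b
      + c2 * (1 - p b2) * z a2 - c2 * p a2 * z b2 + c3 * z a3 := by
  simp only [Matrix.mulVec, dotProduct, hM, rfmKey]
  simp only [ite_mul, mul_ite, mul_zero, zero_mul, mul_one, one_mul, sub_mul, add_mul,
    Finset.sum_add_distrib, Finset.sum_sub_distrib, Finset.sum_ite_eq, Finset.mem_univ, if_true]
  ring

lemma rfmShape0 (n : ℕ) (hn : 2 ≤ n) (l lc : ℝ) (h0 : 0 < n+1) (h1 : 1 < n+1) (hnn : n < n+1) :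
    (fun x : Fin (n+1) → ℝ => rfm n l lc x ⟨0, h0⟩)
    = fun x => (-l) * x ⟨0, h0⟩ * (1 - x ⟨1, h1⟩)
        + 0 * x ⟨0, h0⟩ * (1 - x ⟨0, h0⟩) + lc * x ⟨n, hnn⟩ := by
  funext x
  simp only [rfm]
  rw [if_true, dif_pos h0, dif_pos h1, dif_pos hnn]
  ring

lemma rfmShape1 (n : ℕ) (hn : 2 ≤ n) (l lc : ℝ) (h0 : 0 < n+1) (h1 : 1 < n+1)
    (h2 : 2 < n+1) (hnn : n < n+1) :
    (fun x : Fin (n+1) → ℝ => rfm n l lc x ⟨1, h1⟩)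
    = fun x => l * x ⟨0, h0⟩ * (1 - x ⟨1, h1⟩)
        + (-lc) * x ⟨1, h1⟩ * (1 - x ⟨2, h2⟩) + 0 * x ⟨n, hnn⟩ := by
  funext x
  simp only [rfm]
  rw [if_neg (by omega), if_true, dif_pos h0, dif_pos h1, dif_pos h2]
  ring

lemma rfmShapeN (n : ℕ) (hn : 2 ≤ n) (l lc : ℝ) (h0 : 0 < n+1) (hn1 : n - 1 < n+1)
    (hnn : n < n+1) :
    (fun x : Fin (n+1) → ℝ => rfm n l lc x ⟨n, hnn⟩)
    = fun x => lc * x ⟨n - 1, hn1⟩ * (1 - x ⟨n, hnn⟩)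
        + 0 * x ⟨0, h0⟩ * (1 - x ⟨0, h0⟩) + (-lc) * x ⟨n, hnn⟩ := by
  funext x
  simp only [rfm]
  rw [if_neg (by omega), if_neg (by omega), if_true, dif_pos hn1, dif_pos hnn]
  ring

lemma rfmShapeMid (n : ℕ) (hn : 2 ≤ n) (l lc : ℝ) (j : ℕ) (hj2 : 2 ≤ j) (hjn : j ≤ n - 1)
    (ha : j - 1 < n+1) (hb : j < n+1) (hc : j + 1 < n+1) (hnn : n < n+1) :
    (fun x : Fin (n+1) → ℝ => rfm n l lc x ⟨j, hb⟩)
    = fun x => lc * x ⟨j - 1, ha⟩ * (1 - x ⟨j, hb⟩)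
        + (-lc) * x ⟨j, hb⟩ * (1 - x ⟨j + 1, hc⟩) + 0 * x ⟨n, hnn⟩ := by
  funext x
  simp only [rfm]
  rw [if_neg (by omega), if_neg (by omega), if_neg (by omega),
    dif_pos ha, dif_pos hb, dif_pos hc]
  ring

def gx (n : ℕ) (x : Fin (n+1) → ℝ) : ℕ → ℝ := fun k => if h : k < n + 1 then x ⟨k, h⟩ else 0

def vflow (n : ℕ) (l lc : ℝ) (x : Fin (n+1) → ℝ) : ℕ → ℝ := fun k =>
  if k = 0 then lc * gx n x n
  else if k = 1 then l * gx n x 0 * (1 - gx n x 1)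
  else if k ≤ n then lc * gx n x (k-1) * (1 - gx n x k)
  else lc * gx n x n

lemma sum_rfm (n : ℕ) (hn : 2 ≤ n) (l lc : ℝ) (x : Fin (n+1) → ℝ) :
    ∑ k, rfm n l lc x k = 0 := by
  have hstep : ∀ k : Fin (n+1), rfm n l lc x k
      = vflow n l lc x k.val - vflow n l lc x (k.val + 1) := by
    intro ⟨j, hj⟩
    rcases Nat.lt_or_ge j 2 with h2 | h2
    · interval_cases j
      · simp only [rfm, vflow, gx]
        norm_num
        ring
      · simp only [rfm, vflow, gx]
        norm_num
        intro h; omega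
    · rcases eq_or_lt_of_le (show j ≤ n by omega) with hjn | hjn
      · subst hjn
        simp only [rfm, vflow, gx]
        rw [if_neg (show ¬ j = 0 by omega), if_neg (show ¬ j = 1 by omega), if_true,
          if_pos (le_refl j), if_neg (show ¬ j = 0 by omega), if_neg (show ¬ j = 1 by omega),
          if_neg (show ¬ j + 1 = 0 by omega),
          if_neg (show ¬ j + 1 = 1 by omega), if_neg (show ¬ j + 1 ≤ j by omega)]
      · simp only [rfm, vflow, gx]
        rw [if_neg (show ¬ j = 0 by omega), if_neg (show ¬ j = 1 by omega),
          if_neg (show ¬ j = n by omega), if_pos (show j ≤ n by omega),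
          if_neg (show ¬ j = 0 by omega), if_neg (show ¬ j = 1 by omega),
          if_neg (show ¬ j + 1 = 0 by omega), if_neg (show ¬ j + 1 = 1 by omega),
          if_pos (show j + 1 ≤ n by omega), Nat.add_sub_cancel]
  calc ∑ k, rfm n l lc x k
      = ∑ k : Fin (n+1), (vflow n l lc x k.val - vflow n l lc x (k.val + 1)) :=
        Finset.sum_congr rfl (fun k _ => hstep k)
    _ = ∑ k ∈ Finset.range (n+1), (vflow n l lc x k - vflow n l lc x (k + 1)) :=
        Fin.sum_univ_eq_sum_range (fun j => vflow n l lc x j - vflow n l lc x (j+1)) (n+1)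
    _ = vflow n l lc x 0 - vflow n l lc x (n+1) := Finset.sum_range_sub' _ _
    _ = 0 := by
        simp only [vflow]
        rw [if_true, if_neg (show ¬ n + 1 = 0 by omega),
          if_neg (show ¬ n + 1 = 1 by omega), if_neg (show ¬ n + 1 ≤ n by omega)]
        ring

/-- The Jacobian of the RFM with pool at an interior equilibrium `γ(s)`
(given by the continued-fraction recursion) has rank exactly `n`; in
particular `0` is an eigenvalue of geometric multiplicity one. -/
theorem jacobian_rank (n : ℕ) (hn : 2 ≤ n) (l lc : ℝ)
    (hl : 0 < l) (hlc : 0 < lc) (s : ℝ) (hs : 0 < s)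
    (γ : ℕ → ℝ)
    (hγ0pos : 0 < γ 0)
    (hmem : ∀ i, 1 ≤ i → i ≤ n → γ i ∈ Set.Ioo (0 : ℝ) 1)
    (hγn : γ n = s)
    (hrec : ∀ i, 1 ≤ i → i ≤ n - 1 → γ i = s / (1 - γ (i + 1)))
    (hγ0 : γ 0 = lc * s / (l * (1 - γ 1))) :
    (rfmJac n l lc (fun i => γ i.val)).rank = n := by
  have h0 : 0 < n + 1 := by omega
  have h1 : 1 < n + 1 := by omega
  have h2 : 2 < n + 1 := by omega
  have hnn : n < n + 1 := by omega
  have hn1 : n - 1 < n + 1 := by omega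
  set p : Fin (n+1) → ℝ := fun i => γ i.val with hp
  have hγsub : ∀ i, 1 ≤ i → i ≤ n → (1:ℝ) - γ i ≠ 0 := by
    intro i hi1 hi2 hcon
    have := (hmem i hi1 hi2).2
    linarith
  -- differentiability of each component
  have hdiff : ∀ k : Fin (n+1), DifferentiableAt ℝ (fun x => rfm n l lc x k) p := by
    intro k
    have hk := k.isLt
    rcases Nat.lt_or_ge k.val 1 with hc | hc
    · have hke : k = ⟨0, h0⟩ := Fin.ext (show k.val = 0 by omega)
      rw [hke, rfmShape0 n hn l lc h0 h1 hnn]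
      exact rfmShapeDiff _ _ _ _ _ _ _ _ _
    rcases Nat.lt_or_ge k.val 2 with hc2 | hc2
    · have hke : k = ⟨1, h1⟩ := Fin.ext (show k.val = 1 by omega)
      rw [hke, rfmShape1 n hn l lc h0 h1 h2 hnn]
      exact rfmShapeDiff _ _ _ _ _ _ _ _ _
    rcases Nat.lt_or_ge k.val n with hcn | hcn
    · have hke : k = ⟨k.val, hk⟩ := Fin.ext rfl
      rw [hke, rfmShapeMid n hn l lc k.val (by omega) (by omega) (by omega) hk (by omega) hnn]
      exact rfmShapeDiff _ _ _ _ _ _ _ _ _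
    · have hke : k = ⟨n, hnn⟩ := Fin.ext (show k.val = n by omega)
      rw [hke, rfmShapeN n hn l lc h0 hn1 hnn]
      exact rfmShapeDiff _ _ _ _ _ _ _ _ _
  -- column sums vanish
  have hcol : ∀ i : Fin (n+1), ∑ k, rfmJac n l lc p k i = 0 := by
    intro i
    have hsum0 : (fun x : Fin (n+1) → ℝ => ∑ k, rfm n l lc x k) = fun _ => 0 :=
      funext (sum_rfm n hn l lc)
    have hfd : fderiv ℝ (fun x : Fin (n+1) → ℝ => ∑ k, rfm n l lc x k) p = 0 := by
      rw [hsum0]; exact fderiv_const_apply 0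
    have hsplit := fderiv_fun_sum (𝕜 := ℝ) (u := Finset.univ)
      (A := fun (k : Fin (n+1)) (x : Fin (n+1) → ℝ) => rfm n l lc x k) (x := p)
      (fun k _ => hdiff k)
    calc ∑ k, rfmJac n l lc p k i
        = ∑ k, fderiv ℝ (fun x => rfm n l lc x k) p (Pi.single i 1) := rfl
      _ = (∑ k, fderiv ℝ (fun x => rfm n l lc x k) p) (Pi.single i 1) :=
          (ContinuousLinearMap.sum_apply _ _ _).symm
      _ = fderiv ℝ (fun x : Fin (n+1) → ℝ => ∑ k, rfm n l lc x k) p (Pi.single i 1) := by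
          rw [hsplit]
      _ = 0 := by rw [hfd]; rfl
  -- determinant vanishes, giving a nonzero kernel vector
  have hdet : (rfmJac n l lc p).det = 0 := by
    have hT : ∃ v, v ≠ 0 ∧ (rfmJac n l lc p)ᵀ *ᵥ v = 0 := by
      refine ⟨fun _ => 1, ?_, ?_⟩
      · intro hcontra
        exact one_ne_zero (congrFun hcontra ⟨0, h0⟩)
      · funext i
        simp only [Matrix.mulVec, dotProduct, Matrix.transpose_apply, mul_one,
          Pi.zero_apply]
        exact hcol i
    obtain ⟨v, hv0, hv⟩ := hT
    have hdT : (rfmJac n l lc p)ᵀ.det = 0 :=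
      Matrix.exists_mulVec_eq_zero_iff.mp ⟨v, hv0, hv⟩
    rwa [Matrix.det_transpose] at hdT
  obtain ⟨v, hv0, hv⟩ := Matrix.exists_mulVec_eq_zero_iff.mpr hdet
  -- the kernel is one-dimensional: any kernel vector with last coordinate 0 is 0
  have main : ∀ z : Fin (n+1) → ℝ, (rfmJac n l lc p) *ᵥ z = 0 → z ⟨n, hnn⟩ = 0 → z = 0 := by
    intro z hz hzn
    set z' : ℕ → ℝ := fun j => if h : j < n+1 then z ⟨j, h⟩ else 0 with hz'def
    have hz'eq : ∀ j (h : j < n+1), z' j = z ⟨j, h⟩ := by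
      intro j h; simp only [hz'def]; exact dif_pos h
    have EN : lc * (1 - γ n) * z' (n-1) - lc * γ (n-1) * z' n + (-lc) * z' n = 0 := by
      have hE := rfmRowEval (rfmJac n l lc p) z ⟨n, hnn⟩ lc 0 (-lc)
        ⟨n-1, hn1⟩ ⟨n, hnn⟩ ⟨0, h0⟩ ⟨0, h0⟩ ⟨n, hnn⟩ p
        (fun i => by
          simp only [rfmJac, Matrix.of_apply]
          rw [rfmShapeN n hn l lc h0 hn1 hnn])
      have h0eq := congrFun hz ⟨n, hnn⟩
      rw [hE] at h0eq
      simp only [Pi.zero_apply] at h0eq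
      rw [hz'eq (n-1) hn1, hz'eq n hnn]
      linear_combination h0eq
    have E1 : l * (1 - γ 1) * z' 0 - l * γ 0 * z' 1
        + (-lc) * (1 - γ 2) * z' 1 - (-lc) * γ 1 * z' 2 = 0 := by
      have hE := rfmRowEval (rfmJac n l lc p) z ⟨1, h1⟩ l (-lc) 0
        ⟨0, h0⟩ ⟨1, h1⟩ ⟨1, h1⟩ ⟨2, h2⟩ ⟨n, hnn⟩ p
        (fun i => by
          simp only [rfmJac, Matrix.of_apply]
          rw [rfmShape1 n hn l lc h0 h1 h2 hnn])
      have h0eq := congrFun hz ⟨1, h1⟩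
      rw [hE] at h0eq
      simp only [Pi.zero_apply] at h0eq
      rw [hz'eq 0 h0, hz'eq 1 h1, hz'eq 2 h2]
      linear_combination h0eq
    have EMid : ∀ r, 2 ≤ r → r ≤ n - 1 →
        lc * (1 - γ r) * z' (r-1) - lc * γ (r-1) * z' r
        + (-lc) * (1 - γ (r+1)) * z' r - (-lc) * γ r * z' (r+1) = 0 := by
      intro r hr2 hrn
      have hra : r - 1 < n + 1 := by omega
      have hrb : r < n + 1 := by omega
      have hrc : r + 1 < n + 1 := by omega
      have hE := rfmRowEval (rfmJac n l lc p) z ⟨r, hrb⟩ lc (-lc) 0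
        ⟨r-1, hra⟩ ⟨r, hrb⟩ ⟨r, hrb⟩ ⟨r+1, hrc⟩ ⟨n, hnn⟩ p
        (fun i => by
          simp only [rfmJac, Matrix.of_apply]
          rw [rfmShapeMid n hn l lc r hr2 hrn hra hrb hrc hnn])
      have h0eq := congrFun hz ⟨r, hrb⟩
      rw [hE] at h0eq
      simp only [Pi.zero_apply] at h0eq
      rw [hz'eq (r-1) hra, hz'eq r hrb, hz'eq (r+1) hrc]
      linear_combination h0eq
    have H : ∀ j, j ≤ n → z' (n - j) = 0 := by
      intro j
      induction j using Nat.strong_induction_on with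
      | _ j ih =>
        intro hjle
        rcases Nat.lt_or_ge j 1 with hj1 | hj1
        · have hj0 : j = 0 := by omega
          subst hj0
          rw [Nat.sub_zero, hz'eq n hnn]
          exact hzn
        rcases Nat.lt_or_ge j 2 with hj2 | hj2
        · have hj1' : j = 1 := by omega
          subst hj1'
          have hzn' : z' n = 0 := by rw [hz'eq n hnn]; exact hzn
          have hE := EN
          rw [hzn'] at hE
          have hc : lc * (1 - γ n) ≠ 0 := mul_ne_zero hlc.ne' (hγsub n (by omega) le_rfl)
          have h3 : lc * (1 - γ n) * z' (n - 1) = 0 := by linear_combination hE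
          exact (mul_eq_zero.mp h3).resolve_left hc
        rcases Nat.lt_or_ge j n with hjn | hjn
        · have hE := EMid (n - j + 1) (by omega) (by omega)
          have e1 : z' (n - j + 1) = 0 := by
            rw [show n - j + 1 = n - (j-1) by omega]
            exact ih (j-1) (by omega) (by omega)
          have e2 : z' (n - j + 1 + 1) = 0 := by
            rw [show n - j + 1 + 1 = n - (j-2) by omega]
            exact ih (j-2) (by omega) (by omega)
          rw [show n - j + 1 - 1 = n - j by omega, e1, e2] at hE
          have hc : lc * (1 - γ (n - j + 1)) ≠ 0 :=
            mul_ne_zero hlc.ne' (hγsub _ (by omega) (by omega))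
          have h3 : lc * (1 - γ (n - j + 1)) * z' (n - j) = 0 := by linear_combination hE
          exact (mul_eq_zero.mp h3).resolve_left hc
        · have hjn' : j = n := by omega
          have e1 : z' 1 = 0 := by
            rw [show (1:ℕ) = n - (n-1) by omega]
            exact ih (n-1) (by omega) (by omega)
          have e2 : z' 2 = 0 := by
            rw [show (2:ℕ) = n - (n-2) by omega]
            exact ih (n-2) (by omega) (by omega)
          have hE := E1
          rw [e1, e2] at hE
          have hc : l * (1 - γ 1) ≠ 0 := mul_ne_zero hl.ne' (hγsub 1 (by omega) (by omega))
          have h3 : l * (1 - γ 1) * z' 0 = 0 := by linear_combination hE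
          rw [show n - j = 0 by omega]
          exact (mul_eq_zero.mp h3).resolve_left hc
    funext i
    have hi := H (n - i.val) (by omega)
    rw [show n - (n - i.val) = i.val by omega, hz'eq i.val i.isLt] at hi
    simpa using hi
  -- finrank of the kernel is 1
  have hker1 : Module.finrank ℝ (LinearMap.ker (rfmJac n l lc p).mulVecLin) = 1 := by
    apply le_antisymm
    · have hinj : Function.Injective
          ((LinearMap.proj (R := ℝ) (φ := fun _ : Fin (n+1) => ℝ) ⟨n, hnn⟩).comp
            (LinearMap.ker (rfmJac n l lc p).mulVecLin).subtype) := by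
        intro u w huw
        have hu := u.2
        have hw := w.2
        rw [LinearMap.mem_ker, Matrix.mulVecLin_apply] at hu hw
        apply Subtype.ext
        have hsub : (rfmJac n l lc p) *ᵥ (u.1 - w.1) = 0 := by
          rw [Matrix.mulVec_sub, hu, hw, sub_self]
        have hco : (u.1 - w.1) ⟨n, hnn⟩ = 0 := by
          have : u.1 ⟨n, hnn⟩ = w.1 ⟨n, hnn⟩ := huw
          simp [Pi.sub_apply, this]
        have := main (u.1 - w.1) hsub hco
        exact sub_eq_zero.mp this
      calc Module.finrank ℝ (LinearMap.ker (rfmJac n l lc p).mulVecLin)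
          ≤ Module.finrank ℝ ℝ := LinearMap.finrank_le_finrank_of_injective hinj
        _ = 1 := Module.finrank_self ℝ
    · have hvker : v ∈ LinearMap.ker (rfmJac n l lc p).mulVecLin := by
        rw [LinearMap.mem_ker, Matrix.mulVecLin_apply]
        exact hv
      have hnt : Nontrivial (LinearMap.ker (rfmJac n l lc p).mulVecLin) := by
        refine ⟨⟨v, hvker⟩, 0, ?_⟩
        rw [Ne, Submodule.mk_eq_zero]
        exact hv0
      have := Module.finrank_pos_iff (R := ℝ) |>.mpr hnt
      omega
  have hrn := LinearMap.finrank_range_add_finrank_ker (rfmJac n l lc p).mulVecLin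
  rw [Module.finrank_fin_fun] at hrn
  have : (rfmJac n l lc p).rank
      = Module.finrank ℝ (LinearMap.range (rfmJac n l lc p).mulVecLin) := rfl
  rw [this]
  omega
end

section
/- The Jacobian J = J_f(γ(s)) of the RFM with pool at an equilibrium admits the factorization J = L U, where L is the lower bidiagonal matrix with 1's on the diagonal and -1's on the subdiagonal, and U is an upper triangular matrix whose diagonal entries are -λ(1-γ_1), -λ_c(1-γ_2), ..., -λ_c(1-γ_n), 0; in particular det J = 0 and the leading n×n principal minor of U is nonzero when γ_i < 1 for all i. -/
/-- Lower bidiagonal matrix with `1` on the diagonal and `-1` below it. -/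
def Lmat (n : ℕ) : Matrix (Fin (n + 1)) (Fin (n + 1)) ℝ :=
  Matrix.of fun k i =>
    if k = i then 1 else if (k : ℕ) = (i : ℕ) + 1 then -1 else 0

section Aux

open ContinuousLinearMap

private lemma hasQ {m : ℕ} (c : ℝ) (a b : Fin m) (p : Fin m → ℝ) :
    HasFDerivAt (fun x : Fin m → ℝ => c * x a * (1 - x b))
      ((c * p a) • (-(proj b : (Fin m → ℝ) →L[ℝ] ℝ)) +
        (1 - p b) • (c • (proj a : (Fin m → ℝ) →L[ℝ] ℝ))) p :=
  ((hasFDerivAt_apply a p).const_mul c).mul ((hasFDerivAt_apply b p).const_sub 1)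

private lemma hasL {m : ℕ} (c : ℝ) (e : Fin m) (p : Fin m → ℝ) :
    HasFDerivAt (fun x : Fin m → ℝ => c * x e)
      (c • (proj e : (Fin m → ℝ) →L[ℝ] ℝ)) p :=
  (hasFDerivAt_apply e p).const_mul c

private lemma fd1 {m : ℕ} (c c' : ℝ) (a b e : Fin m) (p : Fin m → ℝ) (i : Fin m) :
    fderiv ℝ (fun x : Fin m → ℝ => c * x a * (1 - x b) + c' * x e) p (Pi.single i 1) =
      c * (if a = i then 1 else 0) * (1 - p b) - c * p a * (if b = i then 1 else 0)
        + c' * (if e = i then 1 else 0) := by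
  rw [((hasQ c a b p).fun_add (hasL c' e p)).fderiv]
  simp [ContinuousLinearMap.add_apply, ContinuousLinearMap.smul_apply,
    ContinuousLinearMap.neg_apply, ContinuousLinearMap.proj_apply, Pi.single_apply,
    smul_eq_mul]
  ring

private lemma fd2 {m : ℕ} (c c' : ℝ) (a b e : Fin m) (p : Fin m → ℝ) (i : Fin m) :
    fderiv ℝ (fun x : Fin m → ℝ => c * x a * (1 - x b) - c' * x b * (1 - x e)) p
        (Pi.single i 1) =
      c * (if a = i then 1 else 0) * (1 - p b) - c * p a * (if b = i then 1 else 0)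
        - (c' * (if b = i then 1 else 0) * (1 - p e) - c' * p b * (if e = i then 1 else 0)) := by
  rw [((hasQ c a b p).fun_sub (hasQ c' b e p)).fderiv]
  simp [ContinuousLinearMap.add_apply, ContinuousLinearMap.sub_apply,
    ContinuousLinearMap.smul_apply,
    ContinuousLinearMap.neg_apply, ContinuousLinearMap.proj_apply, Pi.single_apply,
    smul_eq_mul]
  ring

private lemma fd3 {m : ℕ} (c c' : ℝ) (a b : Fin m) (p : Fin m → ℝ) (i : Fin m) :
    fderiv ℝ (fun x : Fin m → ℝ => c * x a * (1 - x b) - c' * x b) p (Pi.single i 1) =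
      c * (if a = i then 1 else 0) * (1 - p b) - c * p a * (if b = i then 1 else 0)
        - c' * (if b = i then 1 else 0) := by
  rw [((hasQ c a b p).fun_sub (hasL c' b p)).fderiv]
  simp [ContinuousLinearMap.add_apply, ContinuousLinearMap.sub_apply,
    ContinuousLinearMap.smul_apply,
    ContinuousLinearMap.neg_apply, ContinuousLinearMap.proj_apply, Pi.single_apply,
    smul_eq_mul]
  ring

/-- Row expansion of multiplication by `Lmat`, first row. -/
private lemma Lmul_row0 {n : ℕ} (M : Matrix (Fin (n+1)) (Fin (n+1)) ℝ)
    (k i : Fin (n+1)) (hk : (k : ℕ) = 0) :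
    (Lmat n * M) k i = M k i := by
  rw [Matrix.mul_apply]
  have h : ∀ j, Lmat n k j * M j i = if j = k then M j i else 0 := by
    intro j
    simp only [Lmat, Matrix.of_apply]
    rcases eq_or_ne j k with h | h
    · subst h; simp
    · rw [if_neg (fun hh => h hh.symm), if_neg (by omega), zero_mul, if_neg h]
  rw [Finset.sum_congr rfl (fun j _ => h j), Finset.sum_ite_eq' Finset.univ k]
  simp

/-- Row expansion of multiplication by `Lmat`, later rows. -/
private lemma Lmul_row {n : ℕ} (M : Matrix (Fin (n+1)) (Fin (n+1)) ℝ)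
    (k i : Fin (n+1)) (hk : 1 ≤ (k : ℕ)) :
    (Lmat n * M) k i = M k i - M ⟨(k : ℕ) - 1, by omega⟩ i := by
  rw [Matrix.mul_apply]
  set kp : Fin (n+1) := ⟨(k : ℕ) - 1, by omega⟩ with hkp
  have hkpv : (kp : ℕ) = (k : ℕ) - 1 := rfl
  have hne : kp ≠ k := by
    intro hC
    have := congrArg Fin.val hC
    omega
  have h : ∀ j, Lmat n k j * M j i =
      (if j = k then M j i else 0) + (if j = kp then -M j i else 0) := by
    intro j
    simp only [Lmat, Matrix.of_apply]
    rcases eq_or_ne j k with h1 | h1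
    · subst h1
      rw [if_pos rfl, if_pos rfl, if_neg (Ne.symm hne), one_mul, add_zero]
    · rcases eq_or_ne j kp with h2 | h2
      · subst h2
        rw [if_neg (fun hh => h1 hh.symm), if_pos (by omega), if_neg h1, if_pos rfl]
        ring
      · rw [if_neg (fun hh => h1 hh.symm),
          if_neg (fun hC => h2 (Fin.ext (show (j : ℕ) = (k : ℕ) - 1 by omega))),
          zero_mul, if_neg h1, if_neg h2, add_zero]
  rw [Finset.sum_congr rfl (fun j _ => h j), Finset.sum_add_distrib,
    Finset.sum_ite_eq' Finset.univ k, Finset.sum_ite_eq' Finset.univ kp]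
  simp [sub_eq_add_neg]

end Aux

set_option maxHeartbeats 1600000 in
/-- LU factorization of the Jacobian at an equilibrium: `J_f(γ) = L U` with
`U` upper triangular with diagonal `(-λ(1-γ₁), -λ_c(1-γ₂), …, -λ_c(1-γ_n), 0)`;
in particular `det J = 0` and the first `n` diagonal entries of `U` are
nonzero. -/
theorem jacobian_LU (n : ℕ) (hn : 2 ≤ n) (l lc : ℝ)
    (hl : 0 < l) (hlc : 0 < lc) (s : ℝ) (hs : 0 < s)
    (γ : ℕ → ℝ)
    (hγ0pos : 0 < γ 0)
    (hmem : ∀ i, 1 ≤ i → i ≤ n → γ i ∈ Set.Ioo (0 : ℝ) 1)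
    (hγn : γ n = s)
    (heq : ∀ i, 1 ≤ i → i ≤ n - 1 → γ i * (1 - γ (i + 1)) = s)
    (heq0 : l * γ 0 * (1 - γ 1) = lc * s) :
    ∃ U : Matrix (Fin (n + 1)) (Fin (n + 1)) ℝ,
      (∀ k i : Fin (n + 1), (i : ℕ) < (k : ℕ) → U k i = 0) ∧
      (∀ i : Fin (n + 1), U i i =
        if (i : ℕ) = 0 then -l * (1 - γ 1)
        else if (i : ℕ) = n then 0
        else -lc * (1 - γ ((i : ℕ) + 1))) ∧
      rfmJac n l lc (fun i => γ i.val) = Lmat n * U ∧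
      (rfmJac n l lc (fun i => γ i.val)).det = 0 ∧
      (∀ i : Fin (n + 1), (i : ℕ) < n → U i i ≠ 0) := by
  set U : Matrix (Fin (n + 1)) (Fin (n + 1)) ℝ := Matrix.of fun k i =>
    if (k : ℕ) = n then 0
    else if (i : ℕ) = n then lc + (if (k : ℕ) + 1 = n then lc * γ (k : ℕ) else 0)
    else if (i : ℕ) = (k : ℕ) then
      (if (k : ℕ) = 0 then -l * (1 - γ 1) else -lc * (1 - γ ((k : ℕ) + 1)))
    else if (i : ℕ) = (k : ℕ) + 1 then
      (if (k : ℕ) = 0 then l * γ 0 else lc * γ (k : ℕ))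
    else 0 with hU
  have htri : ∀ k i : Fin (n + 1), (i : ℕ) < (k : ℕ) → U k i = 0 := by
    intro k i hik
    have hkn : (k : ℕ) ≤ n := by omega
    simp only [hU, Matrix.of_apply]
    split_ifs <;> first | rfl | (exfalso; omega)
  have hdiag : ∀ i : Fin (n + 1), U i i =
      if (i : ℕ) = 0 then -l * (1 - γ 1)
      else if (i : ℕ) = n then 0
      else -lc * (1 - γ ((i : ℕ) + 1)) := by
    intro i
    simp only [hU, Matrix.of_apply]
    split_ifs <;> first | rfl | (exfalso; omega)
  have hfact : rfmJac n l lc (fun i => γ i.val) = Lmat n * U := by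
    ext k i
    have hkn : (k : ℕ) ≤ n := by omega
    rcases eq_or_ne ((k : ℕ)) 0 with hk0 | hk0
    · -- row 0
      have hf : (fun x : Fin (n+1) → ℝ => rfm n l lc x k) =
          (fun x => -l * x ⟨0, by omega⟩ * (1 - x ⟨1, by omega⟩) + lc * x ⟨n, by omega⟩) := by
        funext x
        simp [rfm, hk0, show (0:ℕ) < n+1 by omega, show (1:ℕ) < n+1 by omega,
          show n < n+1 by omega]
      rw [Lmul_row0 U k i hk0]
      simp only [rfmJac, Matrix.of_apply, hf, fd1]
      simp only [hU, Matrix.of_apply, hk0, Fin.ext_iff]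
      simp only [show ¬((0:ℕ) = n) by omega, show (0:ℕ) + 1 = 1 from rfl,
        show ¬((1:ℕ) = n) by omega, if_false, if_true, eq_self_iff_true]
      split_ifs <;> first | ring1 | (exfalso; omega)
    rcases eq_or_ne ((k : ℕ)) 1 with hk1 | hk1
    · -- row 1
      have hf : (fun x : Fin (n+1) → ℝ => rfm n l lc x k) =
          (fun x => l * x ⟨0, by omega⟩ * (1 - x ⟨1, by omega⟩)
            - lc * x ⟨1, by omega⟩ * (1 - x ⟨2, by omega⟩)) := by
        funext x
        simp [rfm, hk1, show (0:ℕ) < n+1 by omega, show (1:ℕ) < n+1 by omega,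
          show 2 < n+1 by omega]
      rw [Lmul_row U k i (by omega)]
      simp only [rfmJac, Matrix.of_apply, hf, fd2]
      simp only [hU, Matrix.of_apply, hk1, Fin.ext_iff]
      simp only [show (1:ℕ) - 1 = 0 from rfl, show ¬((1:ℕ) = n) by omega,
        show ¬((0:ℕ) = n) by omega, show ¬((1:ℕ) = 0) by omega,
        show ((0:ℕ)+1) = 1 from rfl, show ((1:ℕ)+1) = 2 from rfl,
        if_false, if_true, eq_self_iff_true]
      split_ifs <;> first | ring1 | (exfalso; omega)
    rcases eq_or_ne ((k : ℕ)) n with hkn' | hkn'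
    · -- last row
      have hf : (fun x : Fin (n+1) → ℝ => rfm n l lc x k) =
          (fun x => lc * x ⟨n - 1, by omega⟩ * (1 - x ⟨n, by omega⟩)
            - lc * x ⟨n, by omega⟩) := by
        funext x
        simp [rfm, hkn', show n ≠ 0 by omega, show n ≠ 1 by omega,
          show n - 1 < n+1 by omega, show n < n+1 by omega]
      rw [Lmul_row U k i (by omega)]
      simp only [rfmJac, Matrix.of_apply, hf, fd3]
      simp only [hU, Matrix.of_apply, hkn', Fin.ext_iff]
      simp only [show n - 1 + 1 = n by omega, show ¬(n - 1 = n) by omega,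
        show ¬(n - 1 = 0) by omega, if_false, if_true, eq_self_iff_true]
      split_ifs <;> first | ring1 | (exfalso; omega)
    · -- middle rows
      have hk2 : 2 ≤ (k : ℕ) := by omega
      have hkltn : (k : ℕ) < n := by omega
      have hf : (fun x : Fin (n+1) → ℝ => rfm n l lc x k) =
          (fun x => lc * x ⟨(k : ℕ) - 1, by omega⟩ * (1 - x ⟨(k : ℕ), by omega⟩)
            - lc * x ⟨(k : ℕ), by omega⟩ * (1 - x ⟨(k : ℕ) + 1, by omega⟩)) := by
        funext x
        simp [rfm, show (k:ℕ) ≠ 0 by omega, show (k:ℕ) ≠ 1 by omega,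
          show (k:ℕ) ≠ n by omega, show (k:ℕ) - 1 < n+1 by omega,
          show (k:ℕ) < n+1 by omega, show (k:ℕ) + 1 < n+1 by omega]
      rw [Lmul_row U k i (by omega)]
      simp only [rfmJac, Matrix.of_apply, hf, fd2]
      simp only [hU, Matrix.of_apply, Fin.ext_iff]
      simp only [show (k:ℕ) - 1 + 1 = (k:ℕ) by omega, show ¬((k:ℕ) = n) by omega,
        show ¬((k:ℕ) - 1 = n) by omega, show ¬((k:ℕ) = 0) by omega,
        show ¬((k:ℕ) - 1 = 0) by omega, if_false, if_true, eq_self_iff_true]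
      split_ifs <;> first | ring1 | (exfalso; omega)
  have hBT : U.BlockTriangular id := by
    intro i j hij
    exact htri i j hij
  have hUnn : U ⟨n, by omega⟩ ⟨n, by omega⟩ = 0 := by
    simp [hU]
  have hdet : (rfmJac n l lc (fun i => γ i.val)).det = 0 := by
    rw [hfact, Matrix.det_mul]
    have : U.det = 0 := by
      rw [Matrix.det_of_upperTriangular hBT]
      exact Finset.prod_eq_zero (Finset.mem_univ (⟨n, by omega⟩ : Fin (n+1))) hUnn
    rw [this, mul_zero]
  refine ⟨U, htri, hdiag, hfact, hdet, ?_⟩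
  intro i hi
  rw [hdiag i]
  split_ifs with h1 h2
  · have hg := (hmem 1 (by omega) (by omega)).2
    intro hc; nlinarith
  · exfalso; omega
  · have hg := (hmem ((i : ℕ) + 1) (by omega) (by omega)).2
    intro hc; nlinarith
end

section
/- The curve of equilibria γ intersects each affine hyperplane S_p = {x ∈ ℝ^{n+1} : ∑_i x_i = p} transversely: the tangent vector γ'(s) satisfies ⟨γ'(s), 𝟙⟩ > 0 for all s in the domain, where 𝟙 is the all-ones vector. Moreover, for each p in the range of s ↦ ∑_i γ_i(s), the intersection of the curve with S_p consists of exactly one point. -/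
/-- The curve of equilibria `γ` intersects each hyperplane
`S_p = {x : ∑ᵢ xᵢ = p}` transversely: `⟨γ'(s), 𝟙⟩ > 0`; moreover on the range
of `s ↦ ∑ᵢ γᵢ(s)` the intersection with `S_p` is a single point
(`s ↦ ∑ᵢ γᵢ(s)` is injective). -/
theorem gamma_transversal (n : ℕ) (hn : 2 ≤ n) (l lc : ℝ)
    (hl : 0 < l) (hlc : 0 < lc) (sbar : ℝ) (hsbar : 0 < sbar)
    (γ : ℕ → ℝ → ℝ)
    (hγn : ∀ s ∈ Set.Ioo (0 : ℝ) sbar, γ n s = s)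
    (hrec : ∀ i, 1 ≤ i → i ≤ n - 1 → ∀ s ∈ Set.Ioo (0 : ℝ) sbar,
      γ i s = s / (1 - γ (i + 1) s))
    (hγ0 : ∀ s ∈ Set.Ioo (0 : ℝ) sbar,
      γ 0 s = lc * s / (l * (1 - γ 1 s)))
    (hmem : ∀ i, 1 ≤ i → i ≤ n → ∀ s ∈ Set.Ioo (0 : ℝ) sbar,
      γ i s ∈ Set.Ioo (0 : ℝ) 1) :
    (∀ s ∈ Set.Ioo (0 : ℝ) sbar, ∃ d : ℕ → ℝ,
      (∀ i ≤ n, HasDerivAt (γ i) (d i) s) ∧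
      0 < ∑ i ∈ Finset.range (n + 1), d i) ∧
    (∀ s ∈ Set.Ioo (0 : ℝ) sbar, ∀ t ∈ Set.Ioo (0 : ℝ) sbar,
      ∑ i ∈ Finset.range (n + 1), γ i s = ∑ i ∈ Finset.range (n + 1), γ i t →
      s = t) := by
  have hopen : IsOpen (Set.Ioo (0 : ℝ) sbar) := isOpen_Ioo
  -- downward induction on k for index n - k
  have key : ∀ k : ℕ, 1 ≤ n - k → ∀ s ∈ Set.Ioo (0 : ℝ) sbar,
      ∃ d, 0 < d ∧ HasDerivAt (γ (n - k)) d s := by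
    intro k
    induction k with
    | zero =>
      intro _ s hs
      refine ⟨1, one_pos, ?_⟩
      have heq : γ (n - 0) =ᶠ[nhds s] fun x => x :=
        Filter.eventuallyEq_of_mem (hopen.mem_nhds hs) (fun t ht => by
          simpa using hγn t ht)
      exact (hasDerivAt_id s).congr_of_eventuallyEq heq
    | succ k ih =>
      intro hk s hs
      have hi1 : 1 ≤ n - (k + 1) := hk
      have hnk : n - (k + 1) + 1 = n - k := by omega
      have h1 : 1 ≤ n - k := by omega
      obtain ⟨d, hd, hder⟩ := ih h1 s hs
      have hmem' := hmem (n - k) h1 (Nat.sub_le n k) s hs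
      have h1g : 0 < 1 - γ (n - k) s := by linarith [hmem'.2]
      have hne : (1 : ℝ) - γ (n - k) s ≠ 0 := ne_of_gt h1g
      have hdiv : HasDerivAt (fun x => x / (1 - γ (n - k) x))
          ((1 * (1 - γ (n - k) s) - s * (0 - d)) / (1 - γ (n - k) s) ^ 2) s :=
        (hasDerivAt_id s).div ((hasDerivAt_const s (1 : ℝ)).sub hder) hne
      refine ⟨_, ?_, hdiv.congr_of_eventuallyEq ?_⟩
      · apply div_pos
        · nlinarith [hs.1]
        · positivity
      · refine Filter.eventuallyEq_of_mem (hopen.mem_nhds hs) fun t ht => ?_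
        rw [hrec (n - (k + 1)) hi1 (by omega) t ht, hnk]
  have keyi : ∀ i, 1 ≤ i → i ≤ n → ∀ s ∈ Set.Ioo (0 : ℝ) sbar,
      ∃ d, 0 < d ∧ HasDerivAt (γ i) d s := by
    intro i h1 h2 s hs
    have heq : n - (n - i) = i := by omega
    have := key (n - i) (by omega) s hs
    rwa [heq] at this
  have key0 : ∀ s ∈ Set.Ioo (0 : ℝ) sbar, ∃ d, 0 < d ∧ HasDerivAt (γ 0) d s := by
    intro s hs
    obtain ⟨d, hd, hder⟩ := keyi 1 le_rfl (by omega) s hs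
    have hmem' := hmem 1 le_rfl (by omega) s hs
    have h1g : 0 < 1 - γ 1 s := by linarith [hmem'.2]
    have hne : l * (1 - γ 1 s) ≠ 0 := by positivity
    have hnum : HasDerivAt (fun x => lc * x) lc s := by
      simpa using (hasDerivAt_id s).const_mul lc
    have hden : HasDerivAt (fun x => l * (1 - γ 1 x)) (l * (0 - d)) s :=
      ((hasDerivAt_const s (1 : ℝ)).sub hder).const_mul l
    have hdiv := hnum.div hden hne
    refine ⟨_, ?_, hdiv.congr_of_eventuallyEq
      (Filter.eventuallyEq_of_mem (hopen.mem_nhds hs) fun t ht => hγ0 t ht)⟩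
    apply div_pos
    · nlinarith [mul_pos hlc (mul_pos hl h1g),
        mul_pos (mul_pos hlc hs.1) (mul_pos hl hd)]
    · positivity
  have keyall : ∀ i ≤ n, ∀ s ∈ Set.Ioo (0 : ℝ) sbar,
      ∃ d, 0 < d ∧ HasDerivAt (γ i) d s := by
    intro i hi s hs
    rcases Nat.eq_zero_or_pos i with rfl | h
    · exact key0 s hs
    · exact keyi i h hi s hs
  have hchoice : ∀ s ∈ Set.Ioo (0 : ℝ) sbar, ∃ d : ℕ → ℝ,
      ∀ i ≤ n, 0 < d i ∧ HasDerivAt (γ i) (d i) s := by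
    intro s hs
    have h : ∀ i, ∃ x : ℝ, i ≤ n → 0 < x ∧ HasDerivAt (γ i) x s := by
      intro i
      by_cases hi : i ≤ n
      · obtain ⟨d, hd⟩ := keyall i hi s hs
        exact ⟨d, fun _ => hd⟩
      · exact ⟨0, fun h => absurd h hi⟩
    choose d hd using h
    exact ⟨d, hd⟩
  have hF : ∀ s ∈ Set.Ioo (0 : ℝ) sbar, ∃ D, 0 < D ∧
      HasDerivAt (fun x => ∑ i ∈ Finset.range (n + 1), γ i x) D s := by
    intro s hs
    obtain ⟨d, hd⟩ := hchoice s hs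
    refine ⟨∑ i ∈ Finset.range (n + 1), d i, ?_, ?_⟩
    · exact Finset.sum_pos (fun i hi => (hd i (by
        simpa [Nat.lt_succ_iff] using hi)).1) Finset.nonempty_range_add_one
    · exact HasDerivAt.fun_sum fun i hi => (hd i (by
        simpa [Nat.lt_succ_iff] using hi)).2
  constructor
  · intro s hs
    obtain ⟨d, hd⟩ := hchoice s hs
    refine ⟨d, fun i hi => (hd i hi).2, ?_⟩
    exact Finset.sum_pos (fun i hi => (hd i (by
      simpa [Nat.lt_succ_iff] using hi)).1) Finset.nonempty_range_add_one
  · have hmono : StrictMonoOn (fun x => ∑ i ∈ Finset.range (n + 1), γ i x)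
        (Set.Ioo (0 : ℝ) sbar) := by
      apply strictMonoOn_of_deriv_pos (convex_Ioo 0 sbar)
      · intro x hx
        obtain ⟨D, _, h⟩ := hF x hx
        exact h.continuousAt.continuousWithinAt
      · intro x hx
        rw [interior_Ioo] at hx
        obtain ⟨D, hD, h⟩ := hF x hx
        rw [h.deriv]
        exact hD
    exact fun s hs t ht h => hmono.injOn hs ht h
end
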